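/- For all n, d ≥ 2 and all choices of points x_1, ..., x_n ∈ ℝ^d with x_j = (x_{j,1},...,x_{j,d}), the n×n matrix with (j,k) entry ∏_{l=1}^d (1 + cos(x_{j,l} - x_{k,l}))/2 − 1/n is positive semidefinite (Novak's conjecture). -/

import Mathlib

open Complex Finset Matrix ComplexOrder

theorem novak_conjecture {n d : ℕ} (hn : 2 ≤ n) (hd : 2 ≤ d)
    (x : Fin n → Fin d → ℝ) :
    (Matrix.of (fun j k : Fin n =>
      (∏ l : Fin d, (1 + Real.cos (x j l - x k l)) / 2) - (n : ℝ)⁻¹)).PosSemidef := by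
  classical
  have hn0 : (0 : ℝ) < (n : ℝ) := by positivity
  -- the complex Gram matrix
  set w : ℝ → Fin 2 → ℂ := fun a c =>
    if c = 0 then ((Real.sqrt 2 : ℝ)⁻¹ : ℂ) else Complex.exp (-(a * Complex.I)) * ((Real.sqrt 2 : ℝ)⁻¹ : ℂ) with hw
  set M : Matrix (Fin n) (Fin n) ℂ := Matrix.of fun j k =>
    ∏ l : Fin d, (1 + Complex.exp (((x j l - x k l : ℝ) : ℂ) * Complex.I)) / 2 with hMdef
  -- single factor identity
  have hfac : ∀ a b : ℝ, (∑ c : Fin 2, (starRingEnd ℂ) (w a c) * w b c)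
      = (1 + Complex.exp (((a - b : ℝ) : ℂ) * Complex.I)) / 2 := by
    intro a b
    have h2 : ((Real.sqrt 2 : ℝ) : ℂ)⁻¹ * ((Real.sqrt 2 : ℝ) : ℂ)⁻¹ = 2⁻¹ := by
      rw [← mul_inv]
      norm_cast
      rw [Real.mul_self_sqrt (by norm_num)]
      push_cast
      ring
    have hc : (starRingEnd ℂ) (Complex.exp (-(a * Complex.I))) = Complex.exp (a * Complex.I) := by
      rw [← Complex.exp_conj]
      congr 1
      simp [Complex.conj_I, mul_comm]
    have he : Complex.exp (a * Complex.I) * Complex.exp (-(b * Complex.I))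
        = Complex.exp (((a - b : ℝ) : ℂ) * Complex.I) := by
      rw [← Complex.exp_add]
      congr 1
      push_cast
      ring
    have hs : (starRingEnd ℂ) (((Real.sqrt 2 : ℝ) : ℂ)⁻¹) = ((Real.sqrt 2 : ℝ) : ℂ)⁻¹ := by simp
    simp only [hw, Fin.sum_univ_two, if_pos, if_neg (by decide : ¬(1 : Fin 2) = 0)]
    rw [_root_.map_mul, hc, mul_mul_mul_comm, he, hs, h2]
    ring
  -- Gram factorization with rectangular B
  set B : Matrix (Fin d → Fin 2) (Fin n) ℂ := Matrix.of fun s j => ∏ l : Fin d, w (x j l) (s l) with hB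
  have hGram : M = Bᴴ * B := by
    ext j k
    rw [Matrix.mul_apply]
    simp only [Matrix.conjTranspose_apply, hB, Matrix.of_apply, hMdef, star_def]
    calc ∏ l : Fin d, (1 + Complex.exp (((x j l - x k l : ℝ) : ℂ) * Complex.I)) / 2
        = ∏ l : Fin d, ∑ c : Fin 2, (starRingEnd ℂ) (w (x j l) c) * w (x k l) c := by
          exact Finset.prod_congr rfl fun l _ => (hfac (x j l) (x k l)).symm
      _ = ∑ s : Fin d → Fin 2, ∏ l : Fin d, (starRingEnd ℂ) (w (x j l) (s l)) * w (x k l) (s l) :=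
          Finset.prod_univ_sum _ _
      _ = ∑ s : Fin d → Fin 2, (starRingEnd ℂ) (∏ l : Fin d, w (x j l) (s l)) * ∏ l : Fin d, w (x k l) (s l) := by
          simp [Finset.prod_mul_distrib, map_prod]
  have hMpsd : M.PosSemidef := hGram ▸ Matrix.posSemidef_conjTranspose_mul_self B
  have hMdiag : ∀ j, M j j = 1 := by
    intro j
    simp only [hMdef, Matrix.of_apply, sub_self, Complex.ofReal_zero, zero_mul, Complex.exp_zero]
    rw [Finset.prod_const]
    norm_num
  -- square factorization
  obtain ⟨C, hC⟩ : ∃ C : Matrix (Fin n) (Fin n) ℂ, M = Cᴴ * C := by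
    open scoped MatrixOrder CStarAlgebra in
    obtain ⟨C, hC⟩ := CStarAlgebra.nonneg_iff_eq_star_mul_self.mp hMpsd.nonneg
    exact ⟨C, hC⟩
  have hCM : ∀ j k, M j k = ∑ s : Fin n, (starRingEnd ℂ) (C s j) * C s k := by
    intro j k
    rw [hC, Matrix.mul_apply]
    simp [Matrix.conjTranspose_apply, star_def]
  -- real entries are normSq of M
  have hentry : ∀ j k, (∏ l : Fin d, (1 + Real.cos (x j l - x k l)) / 2) = Complex.normSq (M j k) := by
    intro j k
    rw [hMdef]
    simp only [Matrix.of_apply]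
    rw [map_prod]
    refine Finset.prod_congr rfl fun l _ => ?_
    set θ := x j l - x k l
    have hz : (1 + Complex.exp ((θ : ℂ) * Complex.I)) / 2
        = (((1 + Real.cos θ)/2 : ℝ) : ℂ) + (((Real.sin θ / 2 : ℝ)) : ℂ) * Complex.I := by
      rw [Complex.exp_mul_I, ← Complex.ofReal_cos, ← Complex.ofReal_sin]
      push_cast
      ring
    rw [hz, Complex.normSq_add_mul_I]
    nlinarith [Real.sin_sq_add_cos_sq θ]
  rw [Matrix.posSemidef_iff_dotProduct_mulVec]
  constructor
  · -- IsHermitian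
    ext j k
    simp only [Matrix.conjTranspose_apply, Matrix.of_apply, star_def, Complex.conj_ofReal,
      RCLike.star_def, starRingEnd_apply, star_trivial]
    have : ∀ l, Real.cos (x k l - x j l) = Real.cos (x j l - x k l) := by
      intro l; rw [← Real.cos_neg]; ring_nf
    simp [this]
  · intro v
    set a : Fin n → Fin n → ℂ := fun s t => ∑ j, (v j : ℂ) * ((starRingEnd ℂ) (C s j) * C t j)
      with ha
    have htr : ∑ t : Fin n, a t t = ∑ j, (v j : ℂ) := by
      rw [Finset.sum_comm]
      refine Finset.sum_congr rfl fun j _ => ?_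
      rw [← Finset.mul_sum, ← hCM j j, hMdiag, mul_one]
    have hconjM : ∀ j k, (starRingEnd ℂ) (M j k)
        = ∑ t, C t j * (starRingEnd ℂ) (C t k) := by
      intro j k
      rw [hCM, map_sum]
      refine Finset.sum_congr rfl fun t _ => ?_
      rw [_root_.map_mul, Complex.conj_conj, mul_comm]
    have hconja : ∀ s t, (starRingEnd ℂ) (a s t)
        = ∑ k, (v k : ℂ) * (C s k * (starRingEnd ℂ) (C t k)) := by
      intro s t
      rw [ha, map_sum]
      refine Finset.sum_congr rfl fun k _ => ?_
      rw [_root_.map_mul, _root_.map_mul, Complex.conj_conj, Complex.conj_ofReal]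
    have swap4 : ∀ (F : Fin n → Fin n → Fin n → Fin n → ℂ),
        ∑ j, ∑ k, ∑ s, ∑ t, F j k s t = ∑ s, ∑ t, ∑ j, ∑ k, F j k s t := by
      intro F
      calc ∑ j, ∑ k, ∑ s, ∑ t, F j k s t
          = ∑ j, ∑ s, ∑ k, ∑ t, F j k s t :=
            Finset.sum_congr rfl fun j _ => Finset.sum_comm
        _ = ∑ j, ∑ s, ∑ t, ∑ k, F j k s t :=
            Finset.sum_congr rfl fun j _ => Finset.sum_congr rfl fun s _ => Finset.sum_comm
        _ = ∑ s, ∑ j, ∑ t, ∑ k, F j k s t := Finset.sum_comm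
        _ = ∑ s, ∑ t, ∑ j, ∑ k, F j k s t :=
            Finset.sum_congr rfl fun s _ => Finset.sum_comm
    have hkeyC : ∑ j, ∑ k, (v j : ℂ) * (v k : ℂ) * (M j k * (starRingEnd ℂ) (M j k))
        = ∑ s, ∑ t, a s t * (starRingEnd ℂ) (a s t) := by
      calc ∑ j, ∑ k, (v j : ℂ) * (v k : ℂ) * (M j k * (starRingEnd ℂ) (M j k))
          = ∑ j, ∑ k, ∑ s, ∑ t, ((v j : ℂ) * (starRingEnd ℂ) (C s j) * C t j)
              * ((v k : ℂ) * C s k * (starRingEnd ℂ) (C t k)) := by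
            refine Finset.sum_congr rfl fun j _ => Finset.sum_congr rfl fun k _ => ?_
            rw [hconjM j k, hCM j k, Finset.sum_mul_sum, Finset.mul_sum]
            refine Finset.sum_congr rfl fun s _ => ?_
            rw [Finset.mul_sum]
            refine Finset.sum_congr rfl fun t _ => ?_
            ring
        _ = ∑ s, ∑ t, ∑ j, ∑ k, ((v j : ℂ) * (starRingEnd ℂ) (C s j) * C t j)
              * ((v k : ℂ) * C s k * (starRingEnd ℂ) (C t k)) := swap4 _
        _ = ∑ s, ∑ t, a s t * (starRingEnd ℂ) (a s t) := by
            refine Finset.sum_congr rfl fun s _ => Finset.sum_congr rfl fun t _ => ?_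
            rw [ha, hconja, Finset.sum_mul_sum]
            refine Finset.sum_congr rfl fun j _ => Finset.sum_congr rfl fun k _ => ?_
            ring
    have hkeyR : ∑ j, ∑ k, v j * v k * Complex.normSq (M j k)
        = ∑ s, ∑ t, Complex.normSq (a s t) := by
      apply Complex.ofReal_injective
      push_cast
      simp only [← Complex.mul_conj]
      exact hkeyC
    have h1 : ∑ t, Complex.normSq (a t t) ≤ ∑ s, ∑ t, Complex.normSq (a s t) :=
      Finset.sum_le_sum fun s _ =>
        Finset.single_le_sum (fun t _ => Complex.normSq_nonneg _) (Finset.mem_univ s)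
    have h2 : ∑ t, ((a t t).re) ^ 2 ≤ ∑ t, Complex.normSq (a t t) :=
      Finset.sum_le_sum fun t _ => by
        rw [Complex.normSq_apply]
        nlinarith [sq_nonneg (a t t).im]
    have h3 : (∑ t, (a t t).re) = ∑ j, v j := by
      rw [← Complex.re_sum, htr]
      push_cast
      rw [Complex.re_sum]
      simp
    have h4 : (∑ j, v j) ^ 2 ≤ (n : ℝ) * ∑ t, ((a t t).re) ^ 2 := by
      have := sq_sum_le_card_mul_sum_sq (s := (Finset.univ : Finset (Fin n)))
        (f := fun t => (a t t).re)
      simpa [h3] using this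
    have hvv : ∑ j, ∑ k, v j * v k = (∑ j, v j) ^ 2 := by
      rw [sq, Finset.sum_mul_sum]
    have expand : star v ⬝ᵥ (Matrix.of (fun j k : Fin n =>
          (∏ l : Fin d, (1 + Real.cos (x j l - x k l)) / 2) - (n : ℝ)⁻¹)) *ᵥ v
        = (∑ j, ∑ k, v j * v k * Complex.normSq (M j k)) - (n : ℝ)⁻¹ * (∑ j, v j) ^ 2 := by
      simp only [dotProduct, Matrix.mulVec, Matrix.of_apply, star_trivial]
      have step : ∀ j : Fin n, v j * ∑ k, ((∏ l : Fin d, (1 + Real.cos (x j l - x k l)) / 2)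
            - (n : ℝ)⁻¹) * v k
          = ∑ k, (v j * v k * Complex.normSq (M j k) - (n : ℝ)⁻¹ * (v j * v k)) := by
        intro j
        rw [Finset.mul_sum]
        refine Finset.sum_congr rfl fun k _ => ?_
        rw [← hentry]
        ring
      rw [Finset.sum_congr rfl fun j _ => step j]
      simp only [Finset.sum_sub_distrib]
      rw [← hvv]
      congr 1
      simp only [← Finset.mul_sum]
    rw [expand]
    have hfin : (n : ℝ)⁻¹ * (∑ j, v j) ^ 2 ≤ ∑ j, ∑ k, v j * v k * Complex.normSq (M j k) := by
      rw [hkeyR]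
      have h5 : (n : ℝ)⁻¹ * (∑ j, v j) ^ 2 ≤ ∑ t, ((a t t).re) ^ 2 := by
        rw [inv_mul_le_iff₀ hn0]
        linarith [h4]
      linarith
    linarith
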